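/- Let S_Z be an orbital fuzzy iterated function system and u ∈ F*_S. Then {u_x : x ∈ [u]^*} = {u_x : x ∈ [u]^1}, where [u]^1 = {x : u(x) = 1}. In particular ∨_{x∈[u]^*} u_x = ∨_{x∈[u]^1} u_x. -/

import Mathlib

open Metric Filter Topology Set

/-- The orbit of a point `x` under the family of maps `f i`:
`x` together with all images of `x` under finite compositions of the `f i`. -/
def orbitIFS {X I : Type*} (f : I → X → X) (x : X) : Set X :=
  ⋃ l : List I, {l.foldr (fun i y => f i y) x}

/-- The fractal (Hutchinson–Barnsley) operator `K ↦ ⋃ i, f i '' K`. -/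
def fractalOp {X I : Type*} (f : I → X → X) (K : Set X) : Set X :=
  ⋃ i, f i '' K

/-- Image of a fuzzy set under a map: `f(u)(y) = sup_{x ∈ f⁻¹ y} u x` (0 if empty). -/
noncomputable def fuzzyImage {X : Type*} (g : X → X) (u : X → ℝ) : X → ℝ :=
  fun y => sSup (u '' (g ⁻¹' {y}))

/-- The fuzzy Hutchinson–Barnsley operator `Z(u) = ∨ i, ρ i (f i (u))`. -/
noncomputable def Zop {X I : Type*} (f : I → X → X) (ρ : I → ℝ → ℝ) (u : X → ℝ) : X → ℝ :=
  fun y => ⨆ i, ρ i (fuzzyImage (f i) u y)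

/-- The metric `d_∞(u,v) = sup_{α ∈ (0,1]} h([u]^α, [v]^α)`. -/
noncomputable def dInfty {X : Type*} [MetricSpace X] (u v : X → ℝ) : ℝ :=
  ⨆ α : Ioc (0:ℝ) 1, hausdorffDist {x | (α:ℝ) ≤ u x} {x | (α:ℝ) ≤ v x}

/-- The support of a fuzzy set: the closure of `{x | 0 < u x}`. -/
def fsupp {X : Type*} [MetricSpace X] (u : X → ℝ) : Set X := closure {x | 0 < u x}

/-- The crisp fuzzy point `δ_s`. -/
def fdelta {X : Type*} [DecidableEq X] (s : X) : X → ℝ := fun t => if t = s then 1 else 0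

/-- `u^x` : the restriction of `u` to the closure of the orbit of `w` (zero outside). -/
noncomputable def restrictO {X I : Type*} [MetricSpace X] (f : I → X → X) (u : X → ℝ)
    (w : X) : X → ℝ :=
  (closure (orbitIFS f w)).indicator u

/-- A normal compactly supported fuzzy set (with values in `[0,1]`). -/
def IsFuzzyN {X : Type*} [MetricSpace X] (u : X → ℝ) : Prop :=
  (∀ x, u x ∈ Icc (0:ℝ) 1) ∧ (∃ x, u x = 1) ∧ IsCompact (fsupp u)

/-- An upper semicontinuous normal compactly supported fuzzy set: membership in `F*_X`. -/
def IsFuzzyStar {X : Type*} [MetricSpace X] (u : X → ℝ) : Prop :=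
  IsFuzzyN u ∧ UpperSemicontinuous u

/-- Membership in `F*_S`: for each point of positive membership there is an orbit
containing it together with a point of membership one. -/
def InFS {X I : Type*} [MetricSpace X] (f : I → X → X) (u : X → ℝ) : Prop :=
  IsFuzzyStar u ∧ ∀ x, 0 < u x → ∃ w y, x ∈ orbitIFS f w ∧ y ∈ orbitIFS f w ∧ u y = 1

/-- The orbital contraction condition. -/
def OrbitalContr {X I : Type*} [MetricSpace X] (f : I → X → X) (C : ℝ) : Prop :=
  ∀ i x, ∀ y ∈ orbitIFS f x, ∀ z ∈ orbitIFS f x, dist (f i y) (f i z) ≤ C * dist y z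

/-- An admissible system of grey level maps. -/
def Admissible {I : Type*} (ρ : I → ℝ → ℝ) : Prop :=
  (∀ i, ρ i 0 = 0) ∧ (∀ i, MonotoneOn (ρ i) (Icc (0:ℝ) 1)) ∧
  (∀ i, ∀ t ∈ Icc (0:ℝ) 1, ContinuousWithinAt (ρ i) (Ici t) t) ∧
  (∀ i, ∀ t ∈ Icc (0:ℝ) 1, ρ i t ∈ Icc (0:ℝ) 1) ∧ (∃ j, ρ j 1 = 1)

set_option linter.unusedSectionVars false

section WordAux

variable {X I : Type*}

/-- Apply a word of maps. -/
def wordMap (f : I → X → X) (l : List I) (x : X) : X := l.foldr (fun i y => f i y) x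

/-- Grey-level value of a word. -/
noncomputable def wordVal (ρ : I → ℝ → ℝ) : List I → ℝ
  | [] => 1
  | i :: l => ρ i (wordVal ρ l)

lemma wordVal_mem {ρ : I → ℝ → ℝ} (hρ : Admissible ρ) : ∀ l, wordVal ρ l ∈ Icc (0:ℝ) 1
  | [] => by simp [wordVal]
  | i :: l => hρ.2.2.2.1 i _ (wordVal_mem hρ l)

lemma wordVal_replicate {ρ : I → ℝ → ℝ} {j : I} (hj : ρ j 1 = 1) :
    ∀ n, wordVal ρ (List.replicate n j) = 1
  | 0 => rfl
  | n + 1 => by rw [List.replicate_succ]; show ρ j (wordVal ρ (List.replicate n j)) = 1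
                rw [wordVal_replicate hj n, hj]

lemma wordMap_mem_orbit {f : I → X → X} {x w : X} (hx : x ∈ orbitIFS f w) (l : List I) :
    wordMap f l x ∈ orbitIFS f w := by
  rcases mem_iUnion.1 hx with ⟨m, hm⟩
  simp only [mem_singleton_iff] at hm
  refine mem_iUnion.2 ⟨l ++ m, ?_⟩
  simp only [mem_singleton_iff, List.foldr_append, wordMap, hm]

lemma wordMap_contr [MetricSpace X] {f : I → X → X} {C : ℝ} (horb : OrbitalContr f C)
    (hC0 : 0 ≤ C) {x y w : X} (hx : x ∈ orbitIFS f w) (hy : y ∈ orbitIFS f w) :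
    ∀ l : List I, dist (wordMap f l x) (wordMap f l y) ≤ C ^ l.length * dist x y
  | [] => by simp [wordMap]
  | i :: l => by
      have h1 : dist (wordMap f (i :: l) x) (wordMap f (i :: l) y)
          ≤ C * dist (wordMap f l x) (wordMap f l y) :=
        horb i w _ (wordMap_mem_orbit hx l) _ (wordMap_mem_orbit hy l)
      have h2 := wordMap_contr horb hC0 hx hy l
      calc dist (wordMap f (i :: l) x) (wordMap f (i :: l) y)
          ≤ C * (C ^ l.length * dist x y) := h1.trans (mul_le_mul_of_nonneg_left h2 hC0)
        _ = C ^ (i :: l).length * dist x y := by rw [List.length_cons, pow_succ]; ring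

end WordAux

section Formula

variable {X I : Type*} [MetricSpace X] [DecidableEq X] [Finite I] [Nonempty I]
variable {f : I → X → X} {ρ : I → ℝ → ℝ}

lemma bddAbove_wordVal_image (hρ : Admissible ρ) (s : Set (List I)) :
    BddAbove (wordVal ρ '' s) :=
  ⟨1, by rintro r ⟨l, -, rfl⟩; exact (wordVal_mem hρ l).2⟩

/-- The exact formula for iterates of `Z` on a crisp point. -/
lemma Zn_delta_eq (hρ : Admissible ρ) (x : X) :
    ∀ n t, (Zop f ρ)^[n] (fdelta x) t
      = sSup (wordVal ρ '' {l : List I | l.length = n ∧ wordMap f l x = t}) := by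
  intro n
  induction n with
  | zero =>
    intro t
    simp only [Function.iterate_zero_apply]
    by_cases h : t = x
    · have hset : {l : List I | l.length = 0 ∧ wordMap f l x = t} = {([] : List I)} := by
        ext l
        constructor
        · rintro ⟨hl, -⟩; exact List.length_eq_zero_iff.1 hl
        · rintro rfl; exact ⟨rfl, h.symm⟩
      rw [hset, image_singleton, csSup_singleton]
      simp [fdelta, h, wordVal]
    · have hset : {l : List I | l.length = 0 ∧ wordMap f l x = t} = ∅ := by
        ext l
        simp only [mem_setOf_eq, mem_empty_iff_false, iff_false, not_and]
        intro hl
        rw [List.length_eq_zero_iff] at hl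
        subst hl
        exact fun hm => h hm.symm
      rw [hset, image_empty, Real.sSup_empty]
      simp [fdelta, h]
  | succ n IH =>
    intro t
    rw [Function.iterate_succ_apply']
    set v : X → ℝ := (Zop f ρ)^[n] (fdelta x) with hv
    have hval : ∀ s, v s ∈ Icc (0:ℝ) 1 := by
      intro s
      rw [IH s]
      constructor
      · exact Real.sSup_nonneg (by rintro r ⟨l, -, rfl⟩; exact (wordVal_mem hρ l).1)
      · exact Real.sSup_le (by rintro r ⟨l, -, rfl⟩; exact (wordVal_mem hρ l).2) one_pos.le
    set W : I → Set (List I) := fun i => {m : List I | m.length = n ∧ f i (wordMap f m x) = t}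
      with hW
    -- Step A
    have stepA : ∀ i, sSup (v '' (f i ⁻¹' {t})) = sSup (wordVal ρ '' W i) := by
      intro i
      apply le_antisymm
      · apply Real.sSup_le
        · rintro r ⟨s, hs, rfl⟩
          simp only [mem_preimage, mem_singleton_iff] at hs
          rw [IH s]
          apply Real.sSup_le
          · rintro b ⟨m, ⟨hmlen, hmmap⟩, rfl⟩
            exact le_csSup (bddAbove_wordVal_image hρ _) ⟨m, ⟨hmlen, by rw [hmmap, hs]⟩, rfl⟩
          · exact Real.sSup_nonneg (by rintro r ⟨l, -, rfl⟩; exact (wordVal_mem hρ l).1)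
        · exact Real.sSup_nonneg (by rintro r ⟨l, -, rfl⟩; exact (wordVal_mem hρ l).1)
      · apply Real.sSup_le
        · rintro b ⟨m, ⟨hmlen, hmfi⟩, rfl⟩
          have h1 : wordVal ρ m ≤ v (wordMap f m x) := by
            rw [IH]
            exact le_csSup (bddAbove_wordVal_image hρ _) ⟨m, ⟨hmlen, rfl⟩, rfl⟩
          refine h1.trans (le_csSup ⟨1, ?_⟩ ⟨wordMap f m x, by simpa using hmfi, rfl⟩)
          rintro r ⟨s, -, rfl⟩; exact (hval s).2
        · exact Real.sSup_nonneg (by rintro r ⟨s, -, rfl⟩; exact (hval s).1)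
    -- Step B
    have stepB : ∀ i, ρ i (sSup (wordVal ρ '' W i))
        = sSup (wordVal ρ '' ((fun m => i :: m) '' W i)) := by
      intro i
      have himg : wordVal ρ '' ((fun m => i :: m) '' W i) = (ρ i) '' (wordVal ρ '' W i) := by
        rw [image_image, image_image]
        simp only [wordVal]
      rcases (W i).eq_empty_or_nonempty with hWe | ⟨m₀, hm₀⟩
      · simp [himg, hWe, Real.sSup_empty, hρ.1 i]
      · have hBne : (wordVal ρ '' W i).Nonempty := ⟨_, mem_image_of_mem _ hm₀⟩
        have hBfin : (wordVal ρ '' W i).Finite :=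
          ((List.finite_length_eq I n).subset (fun l hl => hl.1)).image _
        have hmem : sSup (wordVal ρ '' W i) ∈ wordVal ρ '' W i := hBne.csSup_mem hBfin
        obtain ⟨mc, -, hceq⟩ := hmem
        have hcIcc : sSup (wordVal ρ '' W i) ∈ Icc (0:ℝ) 1 := hceq ▸ wordVal_mem hρ mc
        rw [himg]
        apply le_antisymm
        · have hbd : BddAbove ((ρ i) '' (wordVal ρ '' W i)) := by
            refine ⟨1, ?_⟩
            rintro r ⟨b, hb, rfl⟩
            obtain ⟨l, -, rfl⟩ := hb
            exact (hρ.2.2.2.1 i _ (wordVal_mem hρ l)).2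
          exact le_csSup hbd ⟨_, hBne.csSup_mem hBfin, rfl⟩
        · apply Real.sSup_le
          · rintro r ⟨b, hb, rfl⟩
            obtain ⟨l, hl, rfl⟩ := hb
            exact hρ.2.1 i (wordVal_mem hρ l) hcIcc
              (le_csSup (bddAbove_wordVal_image hρ _) ⟨l, hl, rfl⟩)
          · exact (hρ.2.2.2.1 i _ hcIcc).1
    -- Step C
    have hWall : {l : List I | l.length = n + 1 ∧ wordMap f l x = t}
        = ⋃ i, (fun m => i :: m) '' W i := by
      ext l
      constructor
      · rintro ⟨hlen, hmap⟩
        cases l with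
        | nil => simp at hlen
        | cons i m =>
          exact mem_iUnion.2 ⟨i, ⟨m, ⟨by simpa using hlen, hmap⟩, rfl⟩⟩
      · intro hl
        obtain ⟨i, m, ⟨hmlen, hmfi⟩, rfl⟩ := mem_iUnion.1 hl
        exact ⟨by simp [hmlen], hmfi⟩
    have hbddU : BddAbove (⋃ i, wordVal ρ '' ((fun m => i :: m) '' W i)) := by
      refine ⟨1, ?_⟩
      rintro r hr
      obtain ⟨i, hri⟩ := mem_iUnion.1 hr
      obtain ⟨l, -, rfl⟩ := hri
      exact (wordVal_mem hρ l).2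
    have stepC : (⨆ i, sSup (wordVal ρ '' ((fun m => i :: m) '' W i)))
        = sSup (⋃ i, wordVal ρ '' ((fun m => i :: m) '' W i)) := by
      apply le_antisymm
      · refine ciSup_le fun i => ?_
        apply Real.sSup_le
        · intro b hb
          exact le_csSup hbddU (mem_iUnion.2 ⟨i, hb⟩)
        · refine Real.sSup_nonneg ?_
          intro r hr
          obtain ⟨i', hri⟩ := mem_iUnion.1 hr
          obtain ⟨l, -, rfl⟩ := hri
          exact (wordVal_mem hρ l).1
      · apply Real.sSup_le
        · intro b hb
          obtain ⟨i, hbi⟩ := mem_iUnion.1 hb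
          exact (le_csSup (bddAbove_wordVal_image hρ _) hbi).trans
            (le_ciSup (f := fun i => sSup (wordVal ρ '' ((fun m => i :: m) '' W i)))
              (Set.finite_range _).bddAbove i)
        · obtain ⟨i₀⟩ := ‹Nonempty I›
          refine le_trans ?_
            (le_ciSup (f := fun i => sSup (wordVal ρ '' ((fun m => i :: m) '' W i)))
              (Set.finite_range _).bddAbove i₀)
          exact Real.sSup_nonneg (by rintro r ⟨l, -, rfl⟩; exact (wordVal_mem hρ l).1)
    show (⨆ i, ρ i (sSup (v '' (f i ⁻¹' {t}))))
        = sSup (wordVal ρ '' {l : List I | l.length = n + 1 ∧ wordMap f l x = t})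
    rw [hWall, image_iUnion, ← stepC]
    exact iSup_congr fun i => by rw [stepA i, stepB i]

end Formula

section Level

variable {X I : Type*} [MetricSpace X] [DecidableEq X] [Finite I] [Nonempty I]
variable {f : I → X → X} {ρ : I → ℝ → ℝ}

/-- Level sets of iterates of `Z` on a crisp point. -/
lemma levelSet_Zn (hρ : Admissible ρ) (x : X) (n : ℕ) {α : ℝ} (hα : α ∈ Ioc (0:ℝ) 1) :
    {t | α ≤ (Zop f ρ)^[n] (fdelta x) t}
      = (fun l => wordMap f l x) '' {l : List I | l.length = n ∧ α ≤ wordVal ρ l} := by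
  ext t
  simp only [mem_setOf_eq, Zn_delta_eq hρ x n t]
  constructor
  · intro h
    set W := {l : List I | l.length = n ∧ wordMap f l x = t} with hWdef
    have hne : (wordVal ρ '' W).Nonempty := by
      by_contra hne
      rw [not_nonempty_iff_eq_empty] at hne
      rw [hne, Real.sSup_empty] at h
      linarith [hα.1]
    have hfin : (wordVal ρ '' W).Finite :=
      ((List.finite_length_eq I n).subset (fun l hl => hl.1)).image _
    obtain ⟨l, ⟨hlen, hmap⟩, hval⟩ := hne.csSup_mem hfin
    exact ⟨l, ⟨hlen, hval ▸ h⟩, hmap⟩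
  · rintro ⟨l, ⟨hlen, hval⟩, hmap⟩
    exact hval.trans (le_csSup (bddAbove_wordVal_image hρ _) ⟨l, ⟨hlen, hmap⟩, rfl⟩)

lemma levelSet_Zn_nonempty (hρ : Admissible ρ) (x : X) (n : ℕ) {α : ℝ}
    (hα : α ∈ Ioc (0:ℝ) 1) : {t | α ≤ (Zop f ρ)^[n] (fdelta x) t}.Nonempty := by
  obtain ⟨j, hj⟩ := hρ.2.2.2.2
  rw [levelSet_Zn hρ x n hα]
  exact ⟨_, ⟨List.replicate n j, ⟨List.length_replicate,
    (wordVal_replicate hj n).symm ▸ hα.2⟩, rfl⟩⟩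

lemma levelSet_Zn_subset (hρ : Admissible ρ) (x : X) (n : ℕ) {α : ℝ}
    (hα : α ∈ Ioc (0:ℝ) 1) :
    {t | α ≤ (Zop f ρ)^[n] (fdelta x) t} ⊆ (fun l => wordMap f l x) '' {l : List I | l.length = n} := by
  rw [levelSet_Zn hρ x n hα]
  exact image_mono (fun l hl => hl.1)

lemma levelSet_Zn_hdist {C : ℝ} (horb : OrbitalContr f C) (hC0 : 0 ≤ C)
    (hρ : Admissible ρ) {x y w : X} (hx : x ∈ orbitIFS f w) (hy : y ∈ orbitIFS f w)
    (n : ℕ) {α : ℝ} (hα : α ∈ Ioc (0:ℝ) 1) :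
    hausdorffDist {t | α ≤ (Zop f ρ)^[n] (fdelta x) t} {t | α ≤ (Zop f ρ)^[n] (fdelta y) t}
      ≤ C ^ n * dist x y := by
  rw [levelSet_Zn hρ x n hα, levelSet_Zn hρ y n hα]
  apply hausdorffDist_le_of_mem_dist (mul_nonneg (pow_nonneg hC0 n) dist_nonneg)
  · rintro _ ⟨l, hl, rfl⟩
    refine ⟨wordMap f l y, ⟨l, hl, rfl⟩, ?_⟩
    have := wordMap_contr horb hC0 hx hy l
    rwa [hl.1] at this
  · rintro _ ⟨l, hl, rfl⟩
    refine ⟨wordMap f l x, ⟨l, hl, rfl⟩, ?_⟩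
    have := wordMap_contr horb hC0 hy hx l
    rw [hl.1] at this
    rwa [dist_comm y x] at this

end Level

section Key

variable {X I : Type*} [MetricSpace X] [DecidableEq X] [Finite I] [Nonempty I]
variable {f : I → X → X} {ρ : I → ℝ → ℝ}

lemma hdist_le_diam_of_subset {A B M : Set X} (hA : A.Nonempty) (hB : B.Nonempty)
    (hAM : A ⊆ M) (hBM : B ⊆ M) (hM : Bornology.IsBounded M) :
    hausdorffDist A B ≤ diam M :=
  (hausdorffDist_le_diam hA (hM.subset hAM) hB (hM.subset hBM)).trans
    (diam_mono (union_subset hAM hBM) hM)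

/-- Level sets of a member of `F*_X` are closed, nonempty (for `α ≤ 1`) and inside the
support. -/
lemma level_facts {v : X → ℝ} (hv : IsFuzzyStar v) {α : ℝ} (hα : α ∈ Ioc (0:ℝ) 1) :
    IsClosed {t | α ≤ v t} ∧ {t | α ≤ v t}.Nonempty ∧ {t | α ≤ v t} ⊆ fsupp v := by
  refine ⟨?_, ?_, ?_⟩
  · exact hv.2.isClosed_preimage α
  · obtain ⟨p, hp⟩ := hv.1.2.1
    exact ⟨p, by rw [mem_setOf_eq, hp]; exact hα.2⟩
  · exact fun t ht => subset_closure (lt_of_lt_of_le hα.1 ht)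

/-- The main rigidity lemma: the limit fuzzy sets associated to two points of a common
orbit coincide. -/
lemma Ueq {C : ℝ} (hC0 : 0 ≤ C) (hC1 : C < 1) (horb : OrbitalContr f C)
    (hρ : Admissible ρ) (U : X → X → ℝ) {x y w : X}
    (hUx : IsFuzzyStar (U x)) (hUy : IsFuzzyStar (U y))
    (hUcx : Tendsto (fun n => dInfty ((Zop f ρ)^[n] (fdelta x)) (U x)) atTop (nhds 0))
    (hUcy : Tendsto (fun n => dInfty ((Zop f ρ)^[n] (fdelta y)) (U y)) atTop (nhds 0))
    (hxw : x ∈ orbitIFS f w) (hyw : y ∈ orbitIFS f w) :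
    U x = U y := by
  -- bounded word images
  have hwfin : ∀ (z : X) (n : ℕ),
      ((fun l => wordMap f l z) '' {l : List I | l.length = n}).Finite :=
    fun z n => (List.finite_length_eq I n).image _
  -- BddAbove of the dInfty families
  have hbddfam : ∀ (z : X) (n : ℕ), IsFuzzyStar (U z) →
      BddAbove (range fun α : Ioc (0:ℝ) 1 =>
        hausdorffDist {t | (α:ℝ) ≤ (Zop f ρ)^[n] (fdelta z) t} {t | (α:ℝ) ≤ U z t}) := by
    intro z n hUz
    set M : Set X := ((fun l => wordMap f l z) '' {l : List I | l.length = n}) ∪ fsupp (U z)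
      with hM
    have hMb : Bornology.IsBounded M :=
      (hwfin z n).isBounded.union hUz.1.2.2.isBounded
    refine ⟨diam M, ?_⟩
    rintro r ⟨⟨α, hα⟩, rfl⟩
    obtain ⟨-, hne2, hsub2⟩ := level_facts hUz hα
    exact hdist_le_diam_of_subset (levelSet_Zn_nonempty hρ z n hα) hne2
      ((levelSet_Zn_subset hρ z n hα).trans subset_union_left)
      (hsub2.trans subset_union_right) hMb
  -- individual Hausdorff distances bounded by dInfty
  have hle_dInfty : ∀ (z : X) (n : ℕ), IsFuzzyStar (U z) → ∀ {α : ℝ}, α ∈ Ioc (0:ℝ) 1 →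
      hausdorffDist {t | α ≤ (Zop f ρ)^[n] (fdelta z) t} {t | α ≤ U z t}
        ≤ dInfty ((Zop f ρ)^[n] (fdelta z)) (U z) := by
    intro z n hUz α hα
    exact le_ciSup (hbddfam z n hUz) (⟨α, hα⟩ : Ioc (0:ℝ) 1)
  -- the level sets coincide
  have key : ∀ {α : ℝ}, α ∈ Ioc (0:ℝ) 1 → {t | α ≤ U x t} = {t | α ≤ U y t} := by
    intro α hα
    obtain ⟨hclx, hnex, hsubx⟩ := level_facts hUx hα
    obtain ⟨hcly, hney, hsuby⟩ := level_facts hUy hα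
    have hbx : Bornology.IsBounded {t | α ≤ U x t} := hUx.1.2.2.isBounded.subset hsubx
    have hby : Bornology.IsBounded {t | α ≤ U y t} := hUy.1.2.2.isBounded.subset hsuby
    have hfinAD : EMetric.hausdorffEdist {t | α ≤ U x t} {t | α ≤ U y t} ≠ ⊤ :=
      hausdorffEdist_ne_top_of_nonempty_of_bounded hnex hney hbx hby
    have hd0 : hausdorffDist {t | α ≤ U x t} {t | α ≤ U y t} = 0 := by
      refine le_antisymm ?_ hausdorffDist_nonneg
      by_contra hpos
      push_neg at hpos
      -- find a suitable n
      have t3 : Tendsto (fun n => C ^ n * dist x y) atTop (nhds 0) := by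
        simpa using (tendsto_pow_atTop_nhds_zero_of_lt_one hC0 hC1).mul_const (dist x y)
      have hεpos : 0 < hausdorffDist {t | α ≤ U x t} {t | α ≤ U y t} / 3 := by linarith
      obtain ⟨n, h1, h2, h3⟩ := ((hUcx.eventually_lt_const hεpos).and
        ((hUcy.eventually_lt_const hεpos).and (t3.eventually_lt_const hεpos))).exists
      set B := {t | α ≤ (Zop f ρ)^[n] (fdelta x) t} with hB
      set Cs := {t | α ≤ (Zop f ρ)^[n] (fdelta y) t} with hCs
      have hBne : B.Nonempty := levelSet_Zn_nonempty hρ x n hα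
      have hCne : Cs.Nonempty := levelSet_Zn_nonempty hρ y n hα
      have hBb : Bornology.IsBounded B :=
        (hwfin x n).isBounded.subset (levelSet_Zn_subset hρ x n hα)
      have hCb : Bornology.IsBounded Cs :=
        (hwfin y n).isBounded.subset (levelSet_Zn_subset hρ y n hα)
      have hfinAB : EMetric.hausdorffEdist {t | α ≤ U x t} B ≠ ⊤ :=
        hausdorffEdist_ne_top_of_nonempty_of_bounded hnex hBne hbx hBb
      have hfinBC : EMetric.hausdorffEdist B Cs ≠ ⊤ :=
        hausdorffEdist_ne_top_of_nonempty_of_bounded hBne hCne hBb hCb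
      have tri : hausdorffDist {t | α ≤ U x t} {t | α ≤ U y t}
          ≤ hausdorffDist {t | α ≤ U x t} B + (hausdorffDist B Cs
            + hausdorffDist Cs {t | α ≤ U y t}) :=
        (hausdorffDist_triangle hfinAB).trans
          (add_le_add_right (hausdorffDist_triangle hfinBC) _)
      have e1 : hausdorffDist {t | α ≤ U x t} B
          < hausdorffDist {t | α ≤ U x t} {t | α ≤ U y t} / 3 := by
        rw [hausdorffDist_comm]
        exact lt_of_le_of_lt (hle_dInfty x n hUx hα) h1
      have e2 : hausdorffDist B Cs < hausdorffDist {t | α ≤ U x t} {t | α ≤ U y t} / 3 :=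
        lt_of_le_of_lt (levelSet_Zn_hdist horb hC0 hρ hxw hyw n hα) h3
      have e3 : hausdorffDist Cs {t | α ≤ U y t}
          < hausdorffDist {t | α ≤ U x t} {t | α ≤ U y t} / 3 :=
        lt_of_le_of_lt (hle_dInfty y n hUy hα) h2
      linarith
    exact (hclx.hausdorffDist_zero_iff_eq hcly hfinAD).1 hd0
  -- conclude pointwise equality
  funext t
  have hxIcc := hUx.1.1 t
  have hyIcc := hUy.1.1 t
  by_contra hne
  rcases lt_or_gt_of_ne hne with hlt | hlt
  · have hα : U y t ∈ Ioc (0:ℝ) 1 := ⟨lt_of_le_of_lt hxIcc.1 hlt, hyIcc.2⟩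
    have ht : t ∈ {s | U y t ≤ U y s} := mem_setOf_eq ▸ le_refl (U y t)
    rw [← key hα] at ht
    exact absurd ht (not_le.2 hlt)
  · have hα : U x t ∈ Ioc (0:ℝ) 1 := ⟨lt_of_le_of_lt hyIcc.1 hlt, hxIcc.2⟩
    have ht : t ∈ {s | U x t ≤ U x s} := mem_setOf_eq ▸ le_refl (U x t)
    rw [key hα] at ht
    exact absurd ht (not_le.2 hlt)

end Key

/-- Proposition 3.6: `{u_x : x ∈ [u]^*} = {u_x : x ∈ [u]^1}` and the
corresponding suprema coincide. -/
theorem stmt11 {X I : Type*} [MetricSpace X] [CompleteSpace X] [DecidableEq X]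
    [Finite I] [Nonempty I]
    (f : I → X → X) (hcont : ∀ i, Continuous (f i))
    (C : ℝ) (hC0 : 0 ≤ C) (hC1 : C < 1) (horb : OrbitalContr f C)
    (ρ : I → ℝ → ℝ) (hρ : Admissible ρ)
    (u : X → ℝ) (hu : InFS f u)
    (U : X → X → ℝ) (hUStar : ∀ x, 0 < u x → InFS f (U x))
    (hU : ∀ x, 0 < u x →
      Tendsto (fun n => dInfty ((Zop f ρ)^[n] (fdelta x)) (U x)) atTop (nhds 0)) :
    {v : X → ℝ | ∃ x, 0 < u x ∧ U x = v} = {v : X → ℝ | ∃ x, u x = 1 ∧ U x = v} ∧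
    (fun y => ⨆ x : {x // 0 < u x}, U x.1 y) =
      (fun y => ⨆ x : {x // u x = 1}, U x.1 y) := by
  have key : ∀ x, 0 < u x → ∃ x', u x' = 1 ∧ U x' = U x := by
    intro x hx
    obtain ⟨w, y, hxw, hyw, hy1⟩ := hu.2 x hx
    have hy : 0 < u y := hy1 ▸ one_pos
    exact ⟨y, hy1, Ueq hC0 hC1 horb hρ U (hUStar y hy).1 (hUStar x hx).1
      (hU y hy) (hU x hx) hyw hxw⟩
  constructor
  · ext v
    simp only [mem_setOf_eq]
    constructor
    · rintro ⟨x, hx, rfl⟩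
      obtain ⟨x', h1, h2⟩ := key x hx
      exact ⟨x', h1, h2⟩
    · rintro ⟨x, hx1, rfl⟩
      exact ⟨x, hx1 ▸ one_pos, rfl⟩
  · funext t
    have hr : (range fun x : {x // 0 < u x} => U x.1 t)
        = (range fun x : {x // u x = 1} => U x.1 t) := by
      ext r
      simp only [mem_range]
      constructor
      · rintro ⟨⟨x, hx⟩, rfl⟩
        obtain ⟨x', h1, h2⟩ := key x hx
        exact ⟨⟨x', h1⟩, by rw [h2]⟩
      · rintro ⟨⟨x, hx⟩, rfl⟩
        exact ⟨⟨x, hx ▸ one_pos⟩, rfl⟩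
    exact congrArg sSup hr
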